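/- For the binary reflected Gray code: if r_i = r_{i-1} (with the convention r_{-1} = 0) or i = d-1, then deleting bit i from RGC^d(r) yields RGC^{d-1}(take_i(r)); whereas if i < d-1 and r_i ≠ r_{i-1}, then deleting bit i from RGC^d(r) yields RGC^{d-1}(take_i(r)) with bit i complemented. -/

import Mathlib

/-- The binary reflected Gray code word of a bit string `w` (most significant bit
first): bit `i` of the Gray code is the XOR of bits `i` and `i-1` of `w`, with the
convention that the bit at index `-1` is `0`. -/
def gray2 (w : List ℕ) : List ℕ :=
  (List.range w.length).map
    (fun i => (w.getD i 0 + if i = 0 then 0 else w.getD (i - 1) 0) % 2)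

/-- `mirror i w` complements (`x ↦ 1 - x`) the bit of `w` at index `i`. -/
def mirror (i : ℕ) (w : List ℕ) : List ℕ := w.set i (1 - w.getD i 0)

lemma gray2_length (w : List ℕ) : (gray2 w).length = w.length := by simp [gray2]

lemma gray2_getElem (w : List ℕ) (j : ℕ) (h : j < (gray2 w).length) :
    (gray2 w)[j] = (w.getD j 0 + if j = 0 then 0 else w.getD (j - 1) 0) % 2 := by
  simp [gray2] at h ⊢

lemma getD_eraseIdx (w : List ℕ) (i j : ℕ) :
    (w.eraseIdx i).getD j 0 = if j < i then w.getD j 0 else w.getD (j+1) 0 := by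
  simp only [List.getD_eq_getElem?_getD, List.getElem?_eraseIdx]
  split <;> rfl

lemma getD_lt_two (w : List ℕ) (hbits : ∀ x ∈ w, x < 2) (k : ℕ) : w.getD k 0 < 2 := by
  by_cases hk : k < w.length
  · rw [List.getD_eq_getElem _ _ hk]
    exact hbits _ (List.getElem_mem hk)
  · rw [List.getD_eq_default _ _ (by omega)]; omega

/-- For the binary reflected Gray code on `d`-bit words: if `r_i = r_{i-1}`
(with the convention `r_{-1} = 0`) or `i = d-1`, then deleting bit `i` from `RGC^d(r)`
yields `RGC^{d-1}(take_i(r))`; whereas if `i < d-1` and `r_i ≠ r_{i-1}`, then deleting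
bit `i` from `RGC^d(r)` yields `RGC^{d-1}(take_i(r))` with bit `i` complemented. -/
theorem binary_rgc_eraseIdx (d i : ℕ) (hd : 2 ≤ d) (hi : i < d)
    (w : List ℕ) (hw : w.length = d) (hbits : ∀ x ∈ w, x < 2) :
    ((w.getD i 0 = (if i = 0 then 0 else w.getD (i - 1) 0) ∨ i = d - 1) →
        (gray2 w).eraseIdx i = gray2 (w.eraseIdx i)) ∧
    (i < d - 1 → w.getD i 0 ≠ (if i = 0 then 0 else w.getD (i - 1) 0) →
        (gray2 w).eraseIdx i = mirror i (gray2 (w.eraseIdx i))) := by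
  have hb := getD_lt_two w hbits
  have hlen : ∀ j (h1 : j < ((gray2 w).eraseIdx i).length)
      (h2 : j < (gray2 (w.eraseIdx i)).length), j ≠ i →
      ((gray2 w).eraseIdx i)[j] = (gray2 (w.eraseIdx i))[j] := by
    intro j h1 h2 hji
    rcases Nat.lt_or_ge j i with hj | hj
    · rw [List.getElem_eraseIdx_of_lt h1 hj, gray2_getElem, gray2_getElem]
      simp only [getD_eraseIdx, if_pos hj, if_pos (show j - 1 < i by omega)]
    · have hj' : i < j := by omega
      rw [List.getElem_eraseIdx_of_ge h1 hj, gray2_getElem, gray2_getElem]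
      simp only [getD_eraseIdx, if_neg (Nat.not_lt.2 hj), Nat.add_sub_cancel,
        Nat.add_eq_zero, and_false, if_false, one_ne_zero]
      rw [if_neg (by omega), if_neg (show ¬ j - 1 < i by omega)]
      rw [show j - 1 + 1 = j from by omega]
  have hL1 : ((gray2 w).eraseIdx i).length = d - 1 := by
    rw [List.length_eraseIdx_of_lt (by rw [gray2_length]; omega), gray2_length, hw]
  have hL2 : (gray2 (w.eraseIdx i)).length = d - 1 := by
    rw [gray2_length, List.length_eraseIdx_of_lt (by omega), hw]
  constructor
  · intro h
    apply List.ext_getElem (by omega)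
    intro j h1 h2
    by_cases hji : j = i
    · subst hji
      have hjd : j < d - 1 := by omega
      have hid : j ≠ d - 1 := by omega
      have hh : w.getD j 0 = (if j = 0 then 0 else w.getD (j - 1) 0) := by tauto
      rw [List.getElem_eraseIdx_of_ge h1 le_rfl, gray2_getElem, gray2_getElem]
      simp only [getD_eraseIdx, if_neg (lt_irrefl j), Nat.add_sub_cancel,
        Nat.add_eq_zero, and_false, if_false, one_ne_zero]
      by_cases h0 : j = 0
      · subst h0; simp at hh ⊢; rw [hh]; omega
      · rw [if_neg h0, if_pos (show j - 1 < j by omega)]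
        rw [if_neg h0] at hh
        rw [hh]
    · exact hlen j h1 h2 hji
  · intro hlt hne
    have hi' : i < (gray2 (w.eraseIdx i)).length := by omega
    apply List.ext_getElem (by simp [mirror]; omega)
    intro j h1 h2
    simp only [mirror] at h2 ⊢
    rw [List.getElem_set]
    by_cases hji : i = j
    · subst hji
      rw [if_pos rfl, List.getD_eq_getElem _ _ hi',
        List.getElem_eraseIdx_of_ge h1 le_rfl, gray2_getElem, gray2_getElem]
      simp only [getD_eraseIdx, if_neg (lt_irrefl i), Nat.add_sub_cancel,
        Nat.add_eq_zero, and_false, if_false, one_ne_zero]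
      have h1' := hb (i + 1)
      have h2' := hb i
      by_cases h0 : i = 0
      · subst h0
        simp only [↓reduceIte] at hne ⊢
        omega
      · rw [if_neg h0, if_pos (show i - 1 < i by omega)]
        rw [if_neg h0] at hne
        have h3' := hb (i - 1)
        omega
    · rw [if_neg hji]
      exact hlen j h1 (by simpa [mirror] using h2) (fun h => hji h.symm)
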